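/- Let F be a field and I = (X^4, X^3Y, X^2Y^2, Y^4) in F[X,Y]. Then I is Ratliff-Rush closed, i.e. ⋃_{k≥0} (I^{k+1} : I^k) = I, but I is not integrally closed: XY^3 ∉ I while (XY^3)^2 = (X^2Y^2)(Y^4) ∈ I^2, so XY^3 is integral over I. -/

import Mathlib

open MvPolynomial Finsupp Pointwise

section aux
variable {F : Type*} [Field F]

/-- generator exponents -/
noncomputable def gExp : Fin 4 → (Fin 2 →₀ ℕ)
  | 0 => Finsupp.single 0 4
  | 1 => Finsupp.single 0 3 + Finsupp.single 1 1
  | 2 => Finsupp.single 0 2 + Finsupp.single 1 2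
  | 3 => Finsupp.single 1 4

@[simp] lemma gExp_zero : gExp 0 = Finsupp.single 0 4 := rfl
@[simp] lemma gExp_one : gExp 1 = Finsupp.single 0 3 + Finsupp.single 1 1 := rfl
@[simp] lemma gExp_two : gExp 2 = Finsupp.single 0 2 + Finsupp.single 1 2 := rfl
@[simp] lemma gExp_three : gExp 3 = Finsupp.single 1 4 := rfl


def TT (n : ℕ) : Set (Fin 2 →₀ ℕ) :=
  {t | ∃ p q r s : ℕ, p + q + r + s = n ∧
    t = p • gExp 0 + q • gExp 1 + r • gExp 2 + s • gExp 3}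

lemma gExp_mem_TT_one (i : Fin 4) : gExp i ∈ TT 1 := by
  fin_cases i
  · exact ⟨1,0,0,0, by norm_num, by simp⟩
  · exact ⟨0,1,0,0, by norm_num, by simp⟩
  · exact ⟨0,0,1,0, by norm_num, by simp⟩
  · exact ⟨0,0,0,1, by norm_num, by simp⟩

lemma add_mem_TT {n : ℕ} (i : Fin 4) {t : Fin 2 →₀ ℕ} (ht : t ∈ TT n) :
    gExp i + t ∈ TT (n + 1) := by
  obtain ⟨p,q,r,s,hsum,rfl⟩ := ht
  fin_cases i
  · exact ⟨p+1,q,r,s, by omega, by simp [add_smul]; abel⟩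
  · exact ⟨p,q+1,r,s, by omega, by simp [add_smul]; abel⟩
  · exact ⟨p,q,r+1,s, by omega, by simp [add_smul]; abel⟩
  · exact ⟨p,q,r,s+1, by omega, by simp [add_smul]; abel⟩

lemma TT_apply0 {n : ℕ} {t : Fin 2 →₀ ℕ} (ht : t ∈ TT n) :
    ∃ p q r s : ℕ, p + q + r + s = n ∧ t 0 = 4*p + 3*q + 2*r ∧ t 1 = q + 2*r + 4*s := by
  obtain ⟨p,q,r,s,hsum,rfl⟩ := ht
  refine ⟨p,q,r,s,hsum, ?_, ?_⟩ <;>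
    simp [gExp, Finsupp.single_apply] <;> ring

noncomputable def Ispan (F : Type*) [Field F] : Ideal (MvPolynomial (Fin 2) F) :=
  Ideal.span ((fun s => monomial s (1 : F)) '' Set.range gExp)

lemma pow_le (n : ℕ) :
    (Ispan F) ^ (n + 1) ≤ Ideal.span ((fun s => monomial s (1 : F)) '' TT (n + 1)) := by
  induction n with
  | zero =>
    rw [pow_one, Ispan]
    exact Ideal.span_mono (Set.image_mono (by rintro _ ⟨i, rfl⟩; exact gExp_mem_TT_one i))
  | succ n ih =>
    rw [pow_succ]
    calc (Ispan F) ^ (n+1) * Ispan F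
        ≤ Ideal.span ((fun s => monomial s (1 : F)) '' TT (n + 1)) * Ispan F :=
          Ideal.mul_mono_left ih
      _ = Ideal.span (((fun s => monomial s (1 : F)) '' TT (n + 1)) *
            ((fun s => monomial s (1 : F)) '' Set.range gExp)) := Ideal.span_mul_span' _ _
      _ ≤ Ideal.span ((fun s => monomial s (1 : F)) '' TT (n + 2)) := by
          apply Ideal.span_mono
          rintro _ ⟨_, ⟨t, ht, rfl⟩, _, ⟨_, ⟨i, rfl⟩, rfl⟩, rfl⟩
          refine ⟨t + gExp i, ?_, ?_⟩
          · have := add_mem_TT i ht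
            rwa [add_comm (gExp i) t] at this
          · simp [monomial_mul]

lemma colon_le (k : ℕ) : ((Ispan F) ^ (1 + k)).colon (((Ispan F) ^ k : Ideal _) : Set _) ≤ Ispan F := by
  intro f hf
  have hY : (monomial (Finsupp.single 1 4) (1:F)) ∈ Ispan F :=
    Ideal.subset_span ⟨gExp 3, ⟨3, rfl⟩, rfl⟩
  have hYk : (monomial (Finsupp.single 1 4) (1:F)) ^ k ∈ (Ispan F) ^ k :=
    Ideal.pow_mem_pow hY k
  have hmul : f * monomial (Finsupp.single 1 (4 * k)) (1:F) ∈ (Ispan F) ^ (1 + k) := by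
    have := Submodule.mem_colon.mp hf _ hYk
    rw [smul_eq_mul] at this
    rwa [monomial_pow, one_pow, Finsupp.smul_single, smul_eq_mul, mul_comm k 4] at this
  have hmem : f * monomial (Finsupp.single 1 (4 * k)) (1:F) ∈
      Ideal.span ((fun s => monomial s (1 : F)) '' TT (k + 1)) := by
    have h := pow_le (F := F) k
    rw [add_comm 1 k] at hmul
    exact h hmul
  rw [Ispan, mem_ideal_span_monomial_image]
  intro e he
  have hsup : e + Finsupp.single 1 (4 * k) ∈
      (f * monomial (Finsupp.single 1 (4 * k)) (1:F)).support := by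
    rw [MvPolynomial.mem_support_iff, coeff_mul_monomial, mul_one]
    exact MvPolynomial.mem_support_iff.mp he
  obtain ⟨t, ht, hle⟩ := mem_ideal_span_monomial_image.mp hmem _ hsup
  obtain ⟨p, q, r, s, hsum, h0, h1⟩ := TT_apply0 ht
  have hle0 : t 0 ≤ e 0 := by
    have := Finsupp.le_def.mp hle 0
    simpa [Finsupp.single_apply] using this
  have hle1 : t 1 ≤ e 1 + 4 * k := by
    have := Finsupp.le_def.mp hle 1
    simpa [Finsupp.single_apply] using this
  rw [h0] at hle0; rw [h1] at hle1
  have key : 4 ≤ e 0 ∨ (3 ≤ e 0 ∧ 1 ≤ e 1) ∨ (2 ≤ e 0 ∧ 2 ≤ e 1) ∨ 4 ≤ e 1 := by omega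
  rcases key with h | ⟨h, h'⟩ | ⟨h, h'⟩ | h
  · exact ⟨gExp 0, ⟨0, rfl⟩, Finsupp.le_def.mpr fun i => by
      fin_cases i <;> simp [gExp, Finsupp.single_apply] <;> omega⟩
  · exact ⟨gExp 1, ⟨1, rfl⟩, Finsupp.le_def.mpr fun i => by
      fin_cases i <;> simp [gExp, Finsupp.single_apply] <;> omega⟩
  · exact ⟨gExp 2, ⟨2, rfl⟩, Finsupp.le_def.mpr fun i => by
      fin_cases i <;> simp [gExp, Finsupp.single_apply] <;> omega⟩
  · exact ⟨gExp 3, ⟨3, rfl⟩, Finsupp.le_def.mpr fun i => by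
      fin_cases i <;> simp [gExp, Finsupp.single_apply] <;> omega⟩

lemma mon_gExp_zero : (monomial (gExp 0) (1:F)) = X 0 ^ 4 := by
  rw [gExp_zero, X_pow_eq_monomial]
lemma mon_gExp_one : (monomial (gExp 1) (1:F)) = X 0 ^ 3 * X 1 := by
  rw [gExp_one, X_pow_eq_monomial, ← pow_one (X 1), X_pow_eq_monomial, monomial_mul, mul_one]
lemma mon_gExp_two : (monomial (gExp 2) (1:F)) = X 0 ^ 2 * X 1 ^ 2 := by
  rw [gExp_two, X_pow_eq_monomial, X_pow_eq_monomial (n := (1 : Fin 2)), monomial_mul, mul_one]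
lemma mon_gExp_three : (monomial (gExp 3) (1:F)) = X 1 ^ 4 := by
  rw [gExp_three, X_pow_eq_monomial]

lemma Ispan_eq :
    Ispan F = Ideal.span {(X 0 : MvPolynomial (Fin 2) F) ^ 4, X 0 ^ 3 * X 1,
      X 0 ^ 2 * X 1 ^ 2, X 1 ^ 4} := by
  rw [Ispan]
  congr 1
  ext x
  simp only [Set.mem_image, Set.mem_range, Set.mem_insert_iff, Set.mem_singleton_iff]
  constructor
  · rintro ⟨_, ⟨i, rfl⟩, rfl⟩
    fin_cases i
    · exact Or.inl mon_gExp_zero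
    · exact Or.inr (Or.inl mon_gExp_one)
    · exact Or.inr (Or.inr (Or.inl mon_gExp_two))
    · exact Or.inr (Or.inr (Or.inr mon_gExp_three))
  · rintro (rfl | rfl | rfl | rfl)
    · exact ⟨gExp 0, ⟨0, rfl⟩, mon_gExp_zero⟩
    · exact ⟨gExp 1, ⟨1, rfl⟩, mon_gExp_one⟩
    · exact ⟨gExp 2, ⟨2, rfl⟩, mon_gExp_two⟩
    · exact ⟨gExp 3, ⟨3, rfl⟩, mon_gExp_three⟩
end aux


/-- The Ratliff-Rush closure of the power `I^n`:  `⋃_{k≥0} (I^{n+k} : I^k)`. -/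
noncomputable def rrPow {R : Type*} [CommRing R] (I : Ideal R) (n : ℕ) : Ideal R :=
  ⨆ k : ℕ, (I ^ (n + k)).colon ((I ^ k : Ideal R) : Set R)

/-- The ideal `I = (X^4, X^3Y, X^2Y^2, Y^4)` of `F[X,Y]` is Ratliff-Rush closed, but not
integrally closed: `XY^3 ∉ I` while `(XY^3)^2 = (X^2Y^2)·(Y^4) ∈ I^2`, so `XY^3` is
integral over `I`. -/
theorem stmt_15 (F : Type*) [Field F]
    (X Y : MvPolynomial (Fin 2) F)
    (hX : X = MvPolynomial.X 0) (hY : Y = MvPolynomial.X 1)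
    (I : Ideal (MvPolynomial (Fin 2) F))
    (hI : I = Ideal.span {X ^ 4, X ^ 3 * Y, X ^ 2 * Y ^ 2, Y ^ 4}) :
    rrPow I 1 = I ∧
    X * Y ^ 3 ∉ I ∧
    (X * Y ^ 3) ^ 2 = X ^ 2 * Y ^ 2 * Y ^ 4 ∧
    X ^ 2 * Y ^ 2 * Y ^ 4 ∈ I ^ 2 := by
  subst hX hY
  have hIs : I = Ispan F := hI.trans Ispan_eq.symm
  refine ⟨?_, ?_, by ring, ?_⟩
  · rw [hIs, rrPow]
    apply le_antisymm
    · exact iSup_le fun k => colon_le k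
    · refine le_trans ?_
        (le_iSup (fun k => (Ispan F ^ (1 + k)).colon
          ((Ispan F ^ k : Ideal (MvPolynomial (Fin 2) F)) : Set (MvPolynomial (Fin 2) F))) 0)
      intro x hx
      rw [Submodule.mem_colon]
      intro p hp
      rw [smul_eq_mul, pow_one]
      exact Ideal.mul_mem_right p _ hx
  · rw [hIs, Ispan, mem_ideal_span_monomial_image]
    intro h
    have hmon : (MvPolynomial.X 0 : MvPolynomial (Fin 2) F) * MvPolynomial.X 1 ^ 3 =
        monomial (Finsupp.single 0 1 + Finsupp.single 1 3) 1 := by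
      rw [← pow_one (MvPolynomial.X 0), X_pow_eq_monomial, X_pow_eq_monomial, monomial_mul,
        mul_one]
    rw [hmon] at h
    have hsup : (Finsupp.single 0 1 + Finsupp.single 1 3 : Fin 2 →₀ ℕ) ∈
        (monomial (Finsupp.single 0 1 + Finsupp.single 1 3) (1:F)).support := by
      rw [MvPolynomial.mem_support_iff, coeff_monomial, if_pos rfl]; exact one_ne_zero
    obtain ⟨t, ⟨i, rfl⟩, hle⟩ := h _ hsup
    have h0 := Finsupp.le_def.mp hle 0
    have h1 := Finsupp.le_def.mp hle 1
    fin_cases i <;> simp [Finsupp.single_apply] at h0 h1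
  · rw [hI, pow_two]
    refine Ideal.mul_mem_mul (Ideal.subset_span ?_) (Ideal.subset_span ?_) <;> simp
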